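/- Let A, B ∈ M_{4×2}(ℂ) be such that the span of the columns of A together with the columns of B is 3-dimensional, and such that for every (z₀, z₁) ∈ ℂ² with (z₀, z₁) ≠ (0, 0), the linear map z₀A + z₁B : ℂ² → ℂ⁴ is injective. Then there exist G ∈ GL(4, ℂ) and g ∈ GL(2, ℂ) such that G·A·g = A₀ and G·B·g = B₀, where A₀ has rows (1,0), (0,1), (0,0), (0,0) and B₀ has rows (0,0), (1,0), (0,1), (0,0). -/

import Mathlib

open Matrix

/-- normal form (4.34), Case (ii) of Theorem 4.30. If the columns of
`A` and `B` together span a 3-dimensional subspace of `ℂ⁴` and every nonzero member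
`z₀A + z₁B` of the pencil is injective as a map `ℂ² → ℂ⁴`, then `(A, B)` can be brought
to the standard form by the `GL(4,ℂ) × GL(2,ℂ)`-action. -/
theorem pencil_normal_form_case_ii
    (A B : Matrix (Fin 4) (Fin 2) ℂ)
    (hrank : Module.finrank ℂ
      (Submodule.span ℂ (Set.range Aᵀ ∪ Set.range Bᵀ)) = 3)
    (hinj : ∀ z₀ z₁ : ℂ, (z₀, z₁) ≠ (0, 0) →
      Function.Injective ((z₀ • A + z₁ • B).mulVec)) :
    ∃ (G : Matrix.GeneralLinearGroup (Fin 4) ℂ) (g : Matrix.GeneralLinearGroup (Fin 2) ℂ),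
      (G : Matrix (Fin 4) (Fin 4) ℂ) * A * (g : Matrix (Fin 2) (Fin 2) ℂ) =
        !![1, 0; 0, 1; 0, 0; 0, 0] ∧
      (G : Matrix (Fin 4) (Fin 4) ℂ) * B * (g : Matrix (Fin 2) (Fin 2) ℂ) =
        !![0, 0; 1, 0; 0, 1; 0, 0] := by
  classical
  -- pointwise form of pencil injectivity
  have hP : ∀ z₀ z₁ : ℂ, (z₀, z₁) ≠ (0, 0) → ∀ x : Fin 2 → ℂ,
      z₀ • A.mulVec x + z₁ • B.mulVec x = 0 → x = 0 := by
    intro z₀ z₁ hz x hx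
    apply hinj z₀ z₁ hz
    simp [Matrix.add_mulVec, Matrix.smul_mulVec, hx]
  have hA : Function.Injective A.mulVec := by
    have h := hinj 1 0 (by simp)
    simpa using h
  have hB : Function.Injective B.mulVec := by
    have h := hinj 0 1 (by simp)
    simpa using h
  have hAker : ∀ x : Fin 2 → ℂ, A.mulVec x = 0 → x = 0 := by
    intro x hx
    apply hA; rw [hx, Matrix.mulVec_zero]
  have hBker : ∀ x : Fin 2 → ℂ, B.mulVec x = 0 → x = 0 := by
    intro x hx
    apply hB; rw [hx, Matrix.mulVec_zero]
  set RA := LinearMap.range A.mulVecLin with hRA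
  set RB := LinearMap.range B.mulVecLin with hRB
  have hsup : Module.finrank ℂ ↥(RA ⊔ RB) = 3 := by
    rw [hRA, hRB, A.range_mulVecLin, B.range_mulVecLin, ← Submodule.span_union]
    exact hrank
  have hrkA : Module.finrank ℂ ↥RA = 2 := by
    rw [hRA, LinearMap.finrank_range_of_inj (f := A.mulVecLin) (by exact hA)]
    simp
  have hrkB : Module.finrank ℂ ↥RB = 2 := by
    rw [hRB, LinearMap.finrank_range_of_inj (f := B.mulVecLin) (by exact hB)]
    simp
  have hinf : Module.finrank ℂ ↥(RA ⊓ RB) = 1 := by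
    have h := Submodule.finrank_sup_add_finrank_inf_eq RA RB
    rw [hsup, hrkA, hrkB] at h
    omega
  -- a nonzero vector in the intersection of the ranges
  have hne : RA ⊓ RB ≠ ⊥ := by
    intro h
    rw [h, finrank_bot] at hinf
    exact one_ne_zero hinf.symm
  obtain ⟨v, hvmem, hv0⟩ := (RA ⊓ RB).ne_bot_iff.mp hne
  obtain ⟨u₀, hu₀⟩ := hvmem.1
  obtain ⟨w₀, hw₀⟩ := hvmem.2
  rw [Matrix.mulVecLin_apply] at hu₀ hw₀
  have hu₀0 : u₀ ≠ 0 := by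
    intro h; rw [h, Matrix.mulVec_zero] at hu₀; exact hv0 hu₀.symm
  -- w₀ and u₀ are linearly independent
  have hwu : LinearIndependent ℂ ![w₀, u₀] := by
    rw [Fintype.linearIndependent_iff]
    intro c hc
    simp [Fin.sum_univ_two] at hc
    by_cases hc0 : c 0 = 0
    · have h1 : c 1 • u₀ = 0 := by
        rw [hc0] at hc; simpa using hc
      have hc1 : c 1 = 0 := by
        rcases smul_eq_zero.mp h1 with h | h
        · exact h
        · exact absurd h hu₀0
      intro i; fin_cases i <;> assumption
    · exfalso
      have h1 : c 0 • w₀ = -(c 1 • u₀) := eq_neg_of_add_eq_zero_left hc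
      have h2 : w₀ = ((c 0)⁻¹ * -(c 1)) • u₀ := by
        have := congrArg (fun y => (c 0)⁻¹ • y) h1
        simpa [smul_smul, inv_mul_cancel₀ hc0] using this
      have h3 : (1 : ℂ) • A.mulVec u₀ + (-((c 0)⁻¹ * -(c 1))) • B.mulVec u₀ = 0 := by
        rw [one_smul, hu₀, ← hw₀, h2, Matrix.mulVec_smul]
        simp
      exact hu₀0 (hP 1 (-((c 0)⁻¹ * -(c 1))) (by simp) u₀ h3)
  -- the intersection is spanned by v
  have hspan : Submodule.span ℂ {v} = RA ⊓ RB := by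
    apply Submodule.eq_of_le_of_finrank_le
    · rw [Submodule.span_le, Set.singleton_subset_iff]; exact hvmem
    · rw [hinf, finrank_span_singleton hv0]
  set f₁ := A.mulVec w₀ with hf₁
  set f₃ := B.mulVec u₀ with hf₃
  -- f₁, v, f₃ are linearly independent
  have h3 : LinearIndependent ℂ ![f₁, v, f₃] := by
    rw [Fintype.linearIndependent_iff]
    intro c hc
    simp [Fin.sum_univ_three] at hc
    have hmem : c 2 • f₃ ∈ RA ⊓ RB := by
      constructor
      · refine ⟨-(c 0 • w₀ + c 1 • u₀), ?_⟩
        rw [Matrix.mulVecLin_apply, Matrix.mulVec_neg, Matrix.mulVec_add,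
          Matrix.mulVec_smul, Matrix.mulVec_smul, ← hf₁, hu₀]
        have := eq_neg_of_add_eq_zero_right hc
        rw [this]
      · exact ⟨c 2 • u₀, by rw [Matrix.mulVecLin_apply, Matrix.mulVec_smul, hf₃]⟩
    rw [← hspan, Submodule.mem_span_singleton] at hmem
    obtain ⟨t, ht⟩ := hmem
    have htw : B.mulVec (t • w₀) = B.mulVec (c 2 • u₀) := by
      rw [Matrix.mulVec_smul, Matrix.mulVec_smul, hw₀, ht, hf₃]
    have htw2 : t • w₀ = c 2 • u₀ := hB htw
    have hc2 : c 2 = 0 ∧ t = 0 := by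
      have h := Fintype.linearIndependent_iff.mp hwu ![t, -(c 2)] (by
        simp [Fin.sum_univ_two, htw2])
      constructor
      · have := h 1; simpa using this
      · simpa using h 0
    have hc01 : c 0 • w₀ + c 1 • u₀ = 0 := by
      apply hA
      rw [Matrix.mulVec_add, Matrix.mulVec_smul, Matrix.mulVec_smul, ← hf₁, hu₀,
        Matrix.mulVec_zero]
      rw [hc2.1] at hc
      simpa using hc
    have h01 := Fintype.linearIndependent_iff.mp hwu ![c 0, c 1] (by
      simp [Fin.sum_univ_two, hc01])
    intro i
    fin_cases i
    · simpa using h01 0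
    · simpa using h01 1
    · exact hc2.1
  -- the span of the triple is all of RA ⊔ RB
  have hT : Submodule.span ℂ (Set.range ![f₁, v, f₃]) = RA ⊔ RB := by
    apply Submodule.eq_of_le_of_finrank_le
    · rw [Submodule.span_le]
      rintro x ⟨i, rfl⟩
      fin_cases i
      · exact Submodule.mem_sup_left ⟨w₀, rfl⟩
      · exact Submodule.mem_sup_left ⟨u₀, hu₀⟩
      · exact Submodule.mem_sup_right ⟨u₀, rfl⟩
    · rw [hsup, finrank_span_eq_card h3]
      simp
  -- pick f₄ outside the span
  have hWtop : RA ⊔ RB < ⊤ := by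
    rw [lt_top_iff_ne_top]
    intro h
    rw [h, finrank_top] at hsup
    simp [Module.finrank_fin_fun] at hsup
  obtain ⟨f₄, -, hf₄⟩ := SetLike.exists_of_lt hWtop
  have h4 : LinearIndependent ℂ ![f₁, v, f₃, f₄] := by
    have hsnoc : LinearIndependent ℂ (Fin.snoc ![f₁, v, f₃] f₄ : Fin 4 → Fin 4 → ℂ) :=
      linearIndependent_fin_snoc.mpr ⟨h3, by rw [hT]; exact hf₄⟩
    have heq : (Fin.snoc ![f₁, v, f₃] f₄ : Fin 4 → Fin 4 → ℂ) = ![f₁, v, f₃, f₄] := by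
      funext i
      fin_cases i <;> rfl
    rwa [heq] at hsnoc
  set gmat : Matrix (Fin 2) (Fin 2) ℂ := (Matrix.of ![w₀, u₀])ᵀ with hgmat
  set Mmat : Matrix (Fin 4) (Fin 4) ℂ := (Matrix.of ![f₁, v, f₃, f₄])ᵀ with hMmat
  have hgunit : IsUnit gmat := by
    rw [← Matrix.linearIndependent_cols_iff_isUnit]
    have h : gmatᵀ = Matrix.of ![w₀, u₀] := Matrix.transpose_transpose _
    change LinearIndependent ℂ gmatᵀ
    rw [h]
    exact hwu
  have hMunit : IsUnit Mmat := by
    rw [← Matrix.linearIndependent_cols_iff_isUnit]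
    have h : Mmatᵀ = Matrix.of ![f₁, v, f₃, f₄] := Matrix.transpose_transpose _
    change LinearIndependent ℂ Mmatᵀ
    rw [h]
    exact h4
  obtain ⟨gu, hgu⟩ := hgunit
  obtain ⟨Mu, hMu⟩ := hMunit
  have hAg : A * gmat = Mmat * (!![1, 0; 0, 1; 0, 0; 0, 0] : Matrix (Fin 4) (Fin 2) ℂ) := by
    ext i j
    fin_cases j <;>
      simp [hgmat, hMmat, Matrix.mul_apply, Fin.sum_univ_succ, hf₁, ← hu₀,
        Matrix.mulVec, dotProduct, Fin.sum_univ_two, Matrix.vecHead, Matrix.transpose_apply]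
  have hBg : B * gmat = Mmat * (!![0, 0; 1, 0; 0, 1; 0, 0] : Matrix (Fin 4) (Fin 2) ℂ) := by
    ext i j
    fin_cases j <;>
      simp [hgmat, hMmat, Matrix.mul_apply, Fin.sum_univ_succ, hf₃, ← hw₀,
        Matrix.mulVec, dotProduct, Fin.sum_univ_two, Matrix.vecHead, Matrix.transpose_apply]
  have key : ∀ (C N : Matrix (Fin 4) (Fin 2) ℂ), C * gmat = Mmat * N →
      ((Mu⁻¹ : (Matrix (Fin 4) (Fin 4) ℂ)ˣ) : Matrix (Fin 4) (Fin 4) ℂ) * C *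
        ((gu : (Matrix (Fin 2) (Fin 2) ℂ)ˣ) : Matrix (Fin 2) (Fin 2) ℂ) = N := by
    intro C N h
    rw [Matrix.mul_assoc, hgu, h, ← Matrix.mul_assoc, ← hMu]
    have h1 : ((Mu⁻¹ : (Matrix (Fin 4) (Fin 4) ℂ)ˣ) : Matrix (Fin 4) (Fin 4) ℂ) *
        ((Mu : (Matrix (Fin 4) (Fin 4) ℂ)ˣ) : Matrix (Fin 4) (Fin 4) ℂ) = 1 := Mu.inv_mul
    rw [h1, Matrix.one_mul]
  exact ⟨Mu⁻¹, gu, key A _ hAg, key B _ hBg⟩
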